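/- Let t = 4s+3 with s ≥ 0 an integer, m = 6, and n = 6t. The 2s × 6 array with rows (4i−3, 4i−2, 4i−1, 4i, 8s+2i+3, 8s+2i+5) suitably adjusted as in the construction (row i for 1 ≤ i ≤ 2s has entries a_{i,1} < ... < a_{i,6} where columns 1–4 run through {1,...,4s−2, 4s+3,...,8s+4} in consecutive blocks of 4 and columns 5–6 through {8s+5,...,12s+4} avoiding {10s+2,10s+3}\{α, α+2}) satisfies, for every row i, a_{i,2} + a_{i,4} + a_{i,5} = a_{i,1} + a_{i,3} + a_{i,6}. -/
import Mathlib


/-- For `s ≥ 1`, the `2s × 6` array of Lemma 5.6 (columns 1–4 running through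
`{1,…,4s-2} ∪ {4s+3,…,8s+4}` in consecutive blocks of four, and columns 5–6 pairing up
`{8s+5,…,12s+4}` as described) satisfies the balance identity
`a_{i,2} + a_{i,4} + a_{i,5} = a_{i,1} + a_{i,3} + a_{i,6}` in every row. -/
theorem stmt8 (s : ℕ) (hs : 1 ≤ s) (f : ℕ → ℕ)
    (hf : ∀ x, f x = if x ≤ 4 * s - 2 then x else x + 4)
    (a : ℕ → ℕ → ℕ)
    (ha14 : ∀ i j, 1 ≤ j → j ≤ 4 → a i j = f (4 * (i - 1) + j))
    (ha5 : ∀ i, a i 5 = if i % 2 = 1 then 8 * s + 2 * i + 3 else 8 * s + 2 * i + 2)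
    (ha6 : ∀ i, a i 6 = a i 5 + 2) :
    ∀ i, 1 ≤ i → i ≤ 2 * s →
      a i 2 + a i 4 + a i 5 = a i 1 + a i 3 + a i 6 := by
  intro i h1 h2
  rw [ha14 i 1 (by norm_num) (by norm_num), ha14 i 2 (by norm_num) (by norm_num),
    ha14 i 3 (by norm_num) (by norm_num), ha14 i 4 (by norm_num) (by norm_num),
    ha6, ha5, hf, hf, hf, hf]
  split_ifs <;> omega
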